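/- Let $N \ge 1$, and for each $i \in \{1,\dots,N\}$ let $a_i < 0$, $b_i \in \mathbb{R}$, and $c_i > 0$. Let $\lambda > 0$ and $M \in \mathbb{R}$, and define $r_i^\ast = \frac{1}{a_i}\big( \log(-c_i/a_i) - b_i + \log \lambda \big)$, and suppose $\sum_{i=1}^N c_i r_i^\ast = M$. Then for every $r \in \mathbb{R}^N$ with $\sum_{i=1}^N c_i r_i = M$, one has $\sum_{i=1}^N \exp(a_i r_i + b_i) \ge \sum_{i=1}^N \exp(a_i r_i^\ast + b_i)$; that is, $r^\ast$ is a global minimizer of the total log-linear approximation error over the budget hyperplane. -/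

import Mathlib

open Finset

/-- The Lagrangian stationary point `r* i = (1/aᵢ)(log(-cᵢ/aᵢ) - bᵢ + log λ)` is a global
minimizer of `∑ᵢ exp(aᵢ rᵢ + bᵢ)` over the budget hyperplane `∑ᵢ cᵢ rᵢ = M`. -/
theorem lagrangian_stationary_point_is_min (N : ℕ) (hN : 1 ≤ N)
    (a b c : Fin N → ℝ) (ha : ∀ i, a i < 0) (hc : ∀ i, 0 < c i)
    (lam M : ℝ) (hlam : 0 < lam)
    (rstar : Fin N → ℝ)
    (hrstar : ∀ i, rstar i = (1 / a i) * (Real.log (-(c i) / a i) - b i + Real.log lam))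
    (hbudget : ∑ i, c i * rstar i = M) :
    ∀ r : Fin N → ℝ, (∑ i, c i * r i = M) →
      ∑ i, Real.exp (a i * rstar i + b i) ≤ ∑ i, Real.exp (a i * r i + b i) := by
  intro r hr
  -- key: exp(a i * rstar i + b i) * a i = -lam * c i
  have hexp : ∀ i, Real.exp (a i * rstar i + b i) * a i = -lam * c i := by
    intro i
    have hai : a i ≠ 0 := (ha i).ne
    have harg : a i * rstar i + b i = Real.log (-(c i) / a i) + Real.log lam := by
      rw [hrstar i]; field_simp; ring
    have hpos : 0 < -(c i) / a i := div_pos_of_neg_of_neg (by linarith [hc i]) (ha i)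
    rw [harg, Real.exp_add, Real.exp_log hpos, Real.exp_log hlam]
    field_simp
  -- pointwise convexity bound
  have hpt : ∀ i, Real.exp (a i * rstar i + b i)
      + Real.exp (a i * rstar i + b i) * (a i * (r i - rstar i))
      ≤ Real.exp (a i * r i + b i) := by
    intro i
    have h1 : (a i * (r i - rstar i)) + 1 ≤ Real.exp (a i * (r i - rstar i)) :=
      Real.add_one_le_exp _
    have h2 : Real.exp (a i * r i + b i)
        = Real.exp (a i * rstar i + b i) * Real.exp (a i * (r i - rstar i)) := by
      rw [← Real.exp_add]; ring_nf
    rw [h2]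
    have hpos := Real.exp_pos (a i * rstar i + b i)
    nlinarith [mul_le_mul_of_nonneg_left h1 hpos.le]
  have hzero : ∑ i, Real.exp (a i * rstar i + b i) * (a i * (r i - rstar i)) = 0 := by
    have : ∀ i, Real.exp (a i * rstar i + b i) * (a i * (r i - rstar i))
        = -lam * (c i * r i) - (-lam) * (c i * rstar i) := by
      intro i
      linear_combination (r i - rstar i) * hexp i
    rw [Finset.sum_congr rfl fun i _ => this i, Finset.sum_sub_distrib,
      ← Finset.mul_sum, ← Finset.mul_sum, hr, hbudget]
    ring
  calc ∑ i, Real.exp (a i * rstar i + b i)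
      = ∑ i, (Real.exp (a i * rstar i + b i)
        + Real.exp (a i * rstar i + b i) * (a i * (r i - rstar i))) := by
        rw [Finset.sum_add_distrib, hzero, add_zero]
    _ ≤ ∑ i, Real.exp (a i * r i + b i) := Finset.sum_le_sum fun i _ => hpt i
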